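/- Let G be a graph with no vertex of degree ≤ 1 and no vertex dominated by another vertex, and suppose no vertex of degree ≥ 4 has a satellite. Then for every vertex v with d(v) ≥ 4 and every neighbor u of v, u has at least two neighbors at distance exactly 2 from v, and hence |N({v, u})| ≥ d(v) + 1. -/
import Mathlib


open Finset

variable {V : Type*}

def NSet [Fintype V] [DecidableEq V] (G : SimpleGraph V) [DecidableRel G.Adj]
    (S : Finset V) : Finset V :=
  Finset.univ.filter (fun w => w ∉ S ∧ ∃ x ∈ S, G.Adj w x)

/-- closed neighborhood as a finset -/
def CN [Fintype V] [DecidableEq V] (G : SimpleGraph V) [DecidableRel G.Adj] (v : V) :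
    Finset V := insert v (G.neighborFinset v)

/-- if `G` has minimum degree at least 2, no dominated vertex,
and no vertex of degree ≥ 4 with a satellite, then every vertex `v` of degree
≥ 4 and every neighbor `u` of `v` satisfy: `u` has at least two neighbors at
distance exactly 2 from `v`, hence `|N({v, u})| ≥ d(v) + 1`. -/
theorem stmt19 [Fintype V] [DecidableEq V] (G : SimpleGraph V) [DecidableRel G.Adj]
    (hmin : ∀ v : V, 2 ≤ G.degree v)
    (hnodom : ∀ u v : V, G.Adj u v → ¬ CN G u ⊆ CN G v)
    (hnosat : ∀ v : V, 4 ≤ G.degree v →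
      ¬ ∃ p s : V, G.Adj v p ∧ CN G p \ CN G v = {s}) :
    ∀ v : V, 4 ≤ G.degree v → ∀ u : V, G.Adj v u →
      2 ≤ ((G.neighborFinset u).filter (fun s => s ∉ CN G v)).card ∧
      G.degree v + 1 ≤ (NSet G {v, u}).card := by
  intro v hv u hadj
  set T := (G.neighborFinset u).filter (fun s => s ∉ CN G v) with hT
  have hTeq : T = CN G u \ CN G v := by
    ext w
    simp only [hT, mem_filter, mem_sdiff, CN, mem_insert, SimpleGraph.mem_neighborFinset]
    constructor
    · rintro ⟨h1, h2⟩
      exact ⟨Or.inr h1, h2⟩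
    · rintro ⟨h1 | h1, h2⟩
      · subst h1; exact absurd (Or.inr hadj) h2
      · exact ⟨h1, h2⟩
  have hne : T.Nonempty := by
    rw [Finset.nonempty_iff_ne_empty]
    intro h
    rw [h] at hTeq
    exact hnodom u v hadj.symm (Finset.sdiff_eq_empty_iff_subset.mp hTeq.symm)
  have hone : T.card ≠ 1 := by
    intro h
    obtain ⟨s, hs⟩ := Finset.card_eq_one.mp h
    exact hnosat v hv ⟨u, s, hadj, by rw [← hTeq, hs]⟩
  have hT2 : 2 ≤ T.card := by
    have := Finset.card_pos.mpr hne
    omega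
  refine ⟨hT2, ?_⟩
  set A := (G.neighborFinset v).erase u with hA
  have hAcard : A.card = G.degree v - 1 := by
    rw [hA, Finset.card_erase_of_mem (by rwa [SimpleGraph.mem_neighborFinset])]
    rfl
  have hdisj : Disjoint A T := by
    rw [Finset.disjoint_left]
    intro w hwA hwT
    simp only [hT, mem_filter, CN, mem_insert, SimpleGraph.mem_neighborFinset] at hwT
    exact hwT.2 (Or.inr (by simpa using (Finset.mem_of_mem_erase hwA)))
  have hsub : A ∪ T ⊆ NSet G {v, u} := by
    intro w hw
    simp only [NSet, mem_filter, mem_univ, true_and, mem_insert, mem_singleton]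
    rcases Finset.mem_union.mp hw with hw | hw
    · have hwu := Finset.ne_of_mem_erase hw
      have hwv : G.Adj v w := by simpa using (Finset.mem_of_mem_erase hw)
      refine ⟨?_, v, Or.inl rfl, hwv.symm⟩
      rintro (rfl | rfl)
      · exact G.irrefl hwv
      · exact hwu rfl
    · simp only [hT, mem_filter, CN, mem_insert, SimpleGraph.mem_neighborFinset] at hw
      refine ⟨?_, u, Or.inr rfl, hw.1.symm⟩
      rintro (rfl | rfl)
      · exact hw.2 (Or.inl rfl)
      · exact G.irrefl hw.1
  have := Finset.card_le_card hsub
  rw [Finset.card_union_of_disjoint hdisj, hAcard] at this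
  omega
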